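/- Let γ ∈ M_n(ℕ), 1 ≤ i ≤ j ≤ n, and I = (i_1,…,i_s) ∈ 𝓘_{ij}(s). Then the following identity holds in U: E^γ E^{e_I} = Σ_{v_2=i_2}^{n} Σ_{v_3=i_3}^{n} ⋯ Σ_{v_s=i_s}^{n} (∏_{u=2}^{s} c_u) · E^{γ + Σ_{u=2}^{s}(e_{v_u i_{u−1}} − e_{v_u i_u})}, where c_u := γ_{v_u i_u} if v_u ≠ i_u and c_u := 1 if v_u = i_u, and any term whose exponent matrix has a negative strictly-lower-triangular entry is interpreted as zero. -/

import Mathlib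

open scoped BigOperators

noncomputable section

namespace OspBasis

/-- Commutator. -/
def br {U : Type*} [Ring U] (x y : U) : U := x * y - y * x

/-- Anticommutator. -/
def abr {U : Type*} [Ring U] (x y : U) : U := x * y + y * x

/-- The sign of a generator label: `true` = `+` ↦ 1, `false` = `−` ↦ −1. -/
def sg : Bool → ℂ := fun b => if b then 1 else -1

/-- Generators `B_j^±` of (the universal enveloping algebra of) `osp(1|2n)` together with
the Ganchev–Palev relations. -/
structure OspData (n : ℕ) (U : Type*) [Ring U] [Algebra ℂ U] where
  B : Bool → Fin n → U
  rel : ∀ (i j l : Fin n) (ξ η ε : Bool),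
    br (abr (B ξ i) (B η j)) (B ε l) =
      (sg ε - sg η) • (if j = l then B ξ i else 0) +
      (sg ε - sg ξ) • (if i = l then B η j else 0)

variable {n : ℕ} {U : Type*} [Ring U] [Algebra ℂ U]

/-- `E_{ij} := (1/2){B_i^+, B_j^-}`. -/
def Eop (d : OspData n U) (i j : Fin n) : U :=
  (2 : ℂ)⁻¹ • abr (d.B true i) (d.B false j)

/-- `h_i := E_{ii} − i + 1` (in 1-indexed notation); with 0-indexing, `h_i = E_{ii} − i`. -/
def hOp (d : OspData n U) (i : Fin n) : U :=
  Eop d i i - (((i : ℕ) : ℂ)) • (1 : U)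

/- ### Combinatorics of partitions and tableaux -/

/-- The number of columns of (the Young diagram of) `lam`. -/
def width (lam : Fin n → ℕ) : ℕ := Finset.univ.sup lam

/-- The length of the `l`-th column (0-indexed) of the diagram of `lam`. -/
def colLen (lam : Fin n → ℕ) (l : ℕ) : ℕ :=
  (Finset.univ.filter (fun k : Fin n => l < lam k)).card

/-- `ℓ(λ)`, the number of nonzero parts. -/
def plen (lam : Fin n → ℕ) : ℕ :=
  (Finset.univ.filter (fun k : Fin n => 0 < lam k)).card

/-- A filling `A : ℕ → ℕ → Fin n` (row, column) is semistandard for the shape `lam`: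
rows weakly increase, columns strictly increase (only cells of the diagram matter). -/
def IsSSYT (lam : Fin n → ℕ) (A : ℕ → ℕ → Fin n) : Prop :=
  (∀ (k : Fin n) (l1 l2 : ℕ), l1 ≤ l2 → l2 < lam k → A (k : ℕ) l1 ≤ A (k : ℕ) l2) ∧
  (∀ (k1 k2 : Fin n) (l : ℕ), k1 < k2 → l < lam k2 → A (k1 : ℕ) l < A (k2 : ℕ) l)

/-- A filling is normalized if it takes the default value `0` outside the diagram of `lam`;
this makes the representation of a tableau by a total function unique. -/
def IsNormalized (hn : 0 < n) (lam : Fin n → ℕ) (A : ℕ → ℕ → Fin n) : Prop :=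
  ∀ k l : ℕ, (∀ hk : k < n, lam ⟨k, hk⟩ ≤ l) → A k l = ⟨0, hn⟩

/-- The exponent matrix `γ_A`: `(γ_A)_{ij}` = number of entries equal to `i` in row `j`. -/
def expMat (lam : Fin n → ℕ) (A : ℕ → ℕ → Fin n) : Matrix (Fin n) (Fin n) ℕ :=
  Matrix.of fun i j => ((Finset.range (lam j)).filter (fun l => A (j : ℕ) l = i)).card

/-- The `j`-th row of `D(γ)` as a list: `γ_{ij}` copies of `i`, in increasing order of `i`. -/
def rowList (γ : Matrix (Fin n) (Fin n) ℕ) (j : Fin n) : List (Fin n) :=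
  (List.finRange n).flatMap (fun i => List.replicate (γ i j) i)

/-- The row-weakly-increasing filling `D(γ)` having `γ_{ij}` entries equal to `i` in row `j`. -/
def Dfill (hn : 0 < n) (γ : Matrix (Fin n) (Fin n) ℕ) : ℕ → ℕ → Fin n :=
  fun k l => if hk : k < n then (rowList γ ⟨k, hk⟩).getD l ⟨0, hn⟩ else ⟨0, hn⟩

/-- The Young subgroup `S_{λ'}` acting on columns. -/
abbrev ColPerm (lam : Fin n → ℕ) :=
  ∀ l : Fin (width lam), Equiv.Perm (Fin (colLen lam (l : ℕ)))

/-- The Young subgroup `S_λ` acting on rows. -/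
abbrev RowPerm (lam : Fin n → ℕ) :=
  ∀ k : Fin n, Equiv.Perm (Fin (lam k))

/-- The column-permuted filling `A_σ(k,l) = A(σ_l(k), l)`. -/
def colPermute (lam : Fin n → ℕ) (A : ℕ → ℕ → Fin n) (σ : ColPerm lam) : ℕ → ℕ → Fin n :=
  fun k l =>
    if hl : l < width lam then
      if hk : k < colLen lam l then A ((σ ⟨l, hl⟩) ⟨k, hk⟩ : ℕ) l else A k l
    else A k l

/-- The row-permuted filling `A^τ(k,l) = A(k, τ_k(l))`. -/
def rowPermute (lam : Fin n → ℕ) (A : ℕ → ℕ → Fin n) (τ : RowPerm lam) : ℕ → ℕ → Fin n :=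
  fun k l =>
    if hk : k < n then
      if hl : l < lam ⟨k, hk⟩ then A k ((τ ⟨k, hk⟩) ⟨l, hl⟩ : ℕ) else A k l
    else A k l

/-- `sgn(σ) = sgn(σ_1)⋯sgn(σ_{ℓ(λ')})`. -/
def sgnC (lam : Fin n → ℕ) (σ : ColPerm lam) : ℂ :=
  ∏ l : Fin (width lam), ((Equiv.Perm.sign (σ l) : ℤ) : ℂ)

/-- `B_A^+`, the column-by-column (left to right), top-to-bottom ordered product of the
creation operators prescribed by the filling `A`. -/
def BAop (d : OspData n U) (lam : Fin n → ℕ) (A : ℕ → ℕ → Fin n) : U :=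
  ((List.range (width lam)).map (fun l =>
    ((List.range (colLen lam l)).map (fun k => d.B true (A k l))).prod)).prod

/-- The monomial `E^γ = ∏→_{k=2..n} (E_{k1}^{γ_{k1}} ⋯ E_{k,k−1}^{γ_{k,k−1}})`. -/
def Epow (d : OspData n U) (γ : Matrix (Fin n) (Fin n) ℕ) : U :=
  ((List.finRange n).map (fun (k : Fin n) =>
    ((List.finRange n).map (fun (j : Fin n) =>
      if (j : ℕ) < (k : ℕ) then (Eop d k j) ^ (γ k j) else 1)).prod)).prod

variable {M : Type*} [AddCommGroup M] [Module ℂ M] [Module U M]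

/-- `ω_A := Σ_{σ ∈ S_{λ'}} sgn(σ) B^+_{A_σ} v₀`. -/
def omegaA (d : OspData n U) (lam : Fin n → ℕ) (v0 : M) (A : ℕ → ℕ → Fin n) : M :=
  ∑ σ : ColPerm lam, sgnC lam σ • ((BAop d lam (colPermute lam A σ)) • v0)

/-- `Ω_A := Σ_{τ ∈ S_λ} ω_{A^τ}`. -/
def OmegaA (d : OspData n U) (lam : Fin n → ℕ) (v0 : M) (A : ℕ → ℕ → Fin n) : M :=
  ∑ τ : RowPerm lam, omegaA d lam v0 (rowPermute lam A τ)

/-- `Ω_λ := Ω_{D(γ_λ)}` where `γ_λ = diag(λ_1,…,λ_n)`. -/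
def OmegaLam (d : OspData n U) (hn : 0 < n) (lam : Fin n → ℕ) (v0 : M) : M :=
  OmegaA d lam v0 (Dfill hn (Matrix.diagonal lam))

/- ### Mickelsson–Zhelobenko raising and lowering operators -/

/-- Ordered product over a finite set of (pairwise commuting) algebra elements. -/
def oprod (S : Finset (Fin n)) (f : Fin n → U) : U :=
  ((S.sort (· ≤ ·)).map f).prod

/-- `E^{e_I} = E_{i_2 i_1} E_{i_3 i_2} ⋯ E_{i_s i_{s−1}}` for `I = (i_1, …, i_s)`. -/
def chainE (d : OspData n U) : List (Fin n) → U
  | a :: b :: rest => Eop d b a * chainE d (b :: rest)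
  | _ => 1

/-- `∏_{u} γ_{i_{u+1} i_u}` over consecutive pairs of a list. -/
def chainProd (γ : Matrix (Fin n) (Fin n) ℕ) : List (Fin n) → ℕ
  | a :: b :: rest => γ b a * chainProd γ (b :: rest)
  | _ => 1

/-- `e_I = Σ_u e_{i_{u+1} i_u}` over consecutive pairs of a list. -/
def eJmat : List (Fin n) → Matrix (Fin n) (Fin n) ℕ
  | a :: b :: rest => Matrix.single b a 1 + eJmat (b :: rest)
  | _ => 0

/-- The increasing sequence `I ∈ 𝓘_{ij}(s)` determined by its set `{i} ∪ {j} ∪ T` of members. -/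
def sortIns (i j : Fin n) (T : Finset (Fin n)) : List (Fin n) :=
  Finset.sort (insert i (insert j T)) (· ≤ ·)

/-- The normalized raising operator `z_j^+`. -/
def zplus (d : OspData n U) (j : Fin n) : U :=
  ∑ i ∈ Finset.Iic j, ∑ T ∈ (Finset.Ioo i j).powerset,
    ((-1 : ℂ) ^ (T.card + (if i = j then 0 else 1))) •
      (chainE d (sortIns i j T) * d.B true i *
        oprod ((Finset.Ioo i j) \ T) (fun l => hOp d l - hOp d j - 1) *
        oprod (Finset.Iio i) (fun l => hOp d l - hOp d j))

/-- The normalized lowering operator `z_j^-`. -/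
def zminus (d : OspData n U) (j : Fin n) : U :=
  ∑ i ∈ Finset.Ici j, ∑ T ∈ (Finset.Ioo j i).powerset,
    chainE d (sortIns j i T) * d.B false i *
      oprod ((Finset.Ioi j) \ (insert i T)) (fun l => hOp d j - hOp d l)

/-- The `gl`-lowering operator `y_{mj}` (for `j < m`). -/
def yop (d : OspData n U) (m j : Fin n) : U :=
  Eop d m j * oprod (Finset.Ioo j m) (fun l => hOp d j - hOp d l)
  + ∑ i ∈ Finset.Ioo j m, ∑ T ∈ (Finset.Ioo j i).powerset,
      chainE d (sortIns j i T) * Eop d m i *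
        oprod ((Finset.Ioo j m) \ (insert j (insert i T))) (fun l => hOp d j - hOp d l)

/-- `∏→_{k=2..n} (y_{k1}^{γ_{k1}} ⋯ y_{k,k−1}^{γ_{k,k−1}})`. -/
def Ypow (d : OspData n U) (γ : Matrix (Fin n) (Fin n) ℕ) : U :=
  ((List.finRange n).map (fun (k : Fin n) =>
    ((List.finRange n).map (fun (j : Fin n) =>
      if (j : ℕ) < (k : ℕ) then (yop d k j) ^ (γ k j) else 1)).prod)).prod

/-- `(z_n^+)^{λ_n} ⋯ (z_1^+)^{λ_1}`. -/
def Zword (d : OspData n U) (lam : Fin n → ℕ) : U :=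
  ((List.finRange n).reverse.map (fun j => (zplus d j) ^ (lam j))).prod

/- ### The coefficients `d_i^±(λ)` -/

/-- Extension of `λ` by zero; `lamext lam a = λ_{a+1}` in 1-indexed notation, `λ_{n+1} = 0`. -/
def lamext (lam : Fin n → ℕ) (a : ℕ) : ℕ := if h : a < n then lam ⟨a, h⟩ else 0

/-- `[m]_2`: 0 if `m` is even, 1 if `m` is odd. -/
def parZ (m : ℤ) : ℕ := m.natAbs % 2

/-- The coefficient `d_i^+(λ)`. -/
def dplus (lam : Fin n → ℕ) (i : Fin n) : ℂ :=
  ((-1 : ℂ)) ^ (∑ a ∈ Finset.Ico (i : ℕ) n,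
      (a + 2) * ((lamext lam a - lamext lam (a + 1)) + (if a = (i : ℕ) then 1 else 0)))
    / (((lam i : ℂ) + 1) * (((i : ℕ) : ℂ) + 1))
    * ∏ l ∈ Finset.Iio i,
        (((lam i : ℂ) - (lam l : ℂ) - ((i : ℕ) : ℂ) + ((l : ℕ) : ℂ) + 1) /
         ((lam i : ℂ) - (lam l : ℂ) - ((i : ℕ) : ℂ) + ((l : ℕ) : ℂ) +
           (parZ ((lam i : ℤ) - (lam l : ℤ)) : ℂ)))

/-- The coefficient `d_i^-(λ)`. -/
def dminus (p : ℕ) (lam : Fin n → ℕ) (i : Fin n) : ℂ :=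
  ((-1 : ℂ)) ^ (∑ a ∈ Finset.Ico (i : ℕ) n, (a + 2) * (lamext lam a - lamext lam (a + 1)))
    * ((lam i : ℂ) + 1) * (((i : ℕ) : ℂ) + 1)
    * ((lam i : ℂ) + (n : ℂ) - (((i : ℕ) : ℂ) + 1) + (parZ (lam i : ℤ) : ℂ) * ((p : ℂ) - (n : ℂ)))
    * ∏ l ∈ Finset.Ioi i,
        (((lam i : ℂ) - (lam l : ℂ) - ((i : ℕ) : ℂ) + ((l : ℕ) : ℂ) - 1) /
         ((lam i : ℂ) - (lam l : ℂ) - ((i : ℕ) : ℂ) + ((l : ℕ) : ℂ) -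
           (parZ ((lam i : ℤ) - (lam l : ℤ)) : ℂ)))

/-- The index set of semistandard Young tableaux with at most `p` rows (shape bundled),
in normalized total-function representation. -/
def SSYTp (hn : 0 < n) (p : ℕ) :=
  {x : (Fin n → ℕ) × (ℕ → ℕ → Fin n) //
    Antitone x.1 ∧ plen x.1 ≤ p ∧ IsSSYT x.1 x.2 ∧ IsNormalized hn x.1 x.2}

end OspBasis

open OspBasis

open Classical in
/-- `E^γ` for an integer exponent matrix: interpreted as `0` whenever a strictly
lower-triangular entry is negative. -/
def EpowZ {n : ℕ} {U : Type*} [Ring U] [Algebra ℂ U] (d : OspData n U)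
    (γ : Matrix (Fin n) (Fin n) ℤ) : U :=
  if ∀ a b : Fin n, (b : ℕ) < (a : ℕ) → 0 ≤ γ a b then
    Epow d (Matrix.of fun a b => (γ a b).toNat)
  else 0

section Lemmas

namespace OspBasis

variable {n : ℕ} {U : Type*} [Ring U] [Algebra ℂ U] (d : OspData n U)

lemma br_smul_left (c : ℂ) (x y : U) : br (c • x) y = c • br x y := by
  simp [br, smul_mul_assoc, mul_smul_comm, smul_sub]

lemma br_smul_right (c : ℂ) (x y : U) : br x (c • y) = c • br x y := by
  simp [br, smul_mul_assoc, mul_smul_comm, smul_sub]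

lemma br_abr_right (x y z : U) : br x (abr y z) = abr (br x y) z + abr y (br x z) := by
  simp only [br, abr]
  noncomm_ring

lemma brEBp (a b l : Fin n) :
    br (Eop d a b) (d.B true l) = if b = l then d.B true a else 0 := by
  rw [Eop, br_smul_left, d.rel a b l true false true]
  simp [sg, smul_smul]
  norm_num

lemma brEBm (a b l : Fin n) :
    br (Eop d a b) (d.B false l) = -(if a = l then d.B false b else 0) := by
  rw [Eop, br_smul_left, d.rel a b l true false false]
  simp [sg, smul_smul]
  norm_num
  split <;> simp

lemma E_br (a b c e : Fin n) :
    br (Eop d a b) (Eop d c e) =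
      (if b = c then Eop d a e else 0) - (if e = a then Eop d c b else 0) := by
  rw (occs := .pos [2]) [Eop]
  rw [br_smul_right, br_abr_right, brEBp, brEBm]
  rcases eq_or_ne b c with rfl | h1 <;> rcases eq_or_ne a e with rfl | h2
  · simp [abr, Eop, smul_add, smul_sub, mul_neg, neg_mul]
    try abel
  · simp [abr, Eop, h2, Ne.symm h2, smul_add, smul_sub, mul_neg, neg_mul]
    try abel
  · simp [abr, Eop, h1, smul_add, smul_sub, mul_neg, neg_mul]
    try abel
  · simp [abr, Eop, h1, h2, Ne.symm h2, smul_add, smul_sub, mul_neg, neg_mul]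

lemma E_mul (a b c e : Fin n) :
    Eop d a b * Eop d c e = Eop d c e * Eop d a b
      + (if b = c then Eop d a e else 0) - (if e = a then Eop d c b else 0) := by
  have := E_br d a b c e
  rw [br] at this
  linear_combination (norm := noncomm_ring) this

lemma E_commute (a b c e : Fin n) (h1 : b ≠ c) (h2 : e ≠ a) :
    Commute (Eop d a b) (Eop d c e) := by
  have := E_mul d a b c e
  simp [h1, h2] at this
  exact this


lemma E_single (i j k : Fin n) (hik : i ≠ k) :
    Eop d k j * Eop d j i = Eop d j i * Eop d k j + Eop d k i := by
  have h := E_mul d k j j i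
  simpa [hik] using h

lemma E_pow_mul_succ (i j k : Fin n) (hik : i ≠ k) (hjk : j ≠ k) (m : ℕ) :
    Eop d k j ^ (m + 1) * Eop d j i =
      Eop d j i * Eop d k j ^ (m + 1) + (m + 1) • (Eop d k i * Eop d k j ^ m) := by
  have hc : Commute (Eop d k i) (Eop d k j) := E_commute d k i k j hik hjk
  induction m with
  | zero => simpa using E_single d i j k hik
  | succ m ih =>
      rw [pow_succ, mul_assoc, E_single d i j k hik, mul_add, ← mul_assoc, ih,
        ((hc.pow_right (m + 1)).eq).symm, add_mul, smul_mul_assoc,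
        mul_assoc, mul_assoc, ← pow_succ, ← pow_succ]
      simp only [nsmul_eq_mul]
      push_cast
      noncomm_ring

lemma E_pow_mul (i j k : Fin n) (hik : i ≠ k) (hjk : j ≠ k) (m : ℕ) :
    Eop d k j ^ m * Eop d j i =
      Eop d j i * Eop d k j ^ m + m • (Eop d k i * Eop d k j ^ (m - 1)) := by
  cases m with
  | zero => simp
  | succ m => simpa using E_pow_mul_succ d i j k hik hjk m

/-- A single row block over column list `L`. -/
def blk (d : OspData n U) (γ : Matrix (Fin n) (Fin n) ℕ) (k : Fin n) (L : List (Fin n)) : U :=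
  (L.map fun (j : Fin n) => if (j : ℕ) < (k : ℕ) then (Eop d k j) ^ (γ k j) else 1).prod

lemma blk_nil (γ : Matrix (Fin n) (Fin n) ℕ) (k : Fin n) : blk d γ k [] = 1 := rfl

lemma blk_cons (γ : Matrix (Fin n) (Fin n) ℕ) (k a : Fin n) (L : List (Fin n)) :
    blk d γ k (a :: L) =
      (if (a : ℕ) < (k : ℕ) then (Eop d k a) ^ (γ k a) else 1) * blk d γ k L := by
  simp [blk]

lemma Epow_eq_blk (γ : Matrix (Fin n) (Fin n) ℕ) :
    Epow d γ = ((List.finRange n).map fun k => blk d γ k (List.finRange n)).prod := rfl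

lemma blk_congr {γ γ' : Matrix (Fin n) (Fin n) ℕ} (k : Fin n) (L : List (Fin n))
    (h : ∀ l ∈ L, γ k l = γ' k l) : blk d γ k L = blk d γ' k L := by
  unfold blk
  congr 1
  apply List.map_congr_left
  intro j hj
  rw [h j hj]

lemma commute_blk (x : U) (γ : Matrix (Fin n) (Fin n) ℕ) (k : Fin n) (L : List (Fin n))
    (h : ∀ l ∈ L, (l : ℕ) < (k : ℕ) → Commute x (Eop d k l)) :
    Commute x (blk d γ k L) := by
  apply Commute.list_prod_right
  intro y hy
  rw [List.mem_map] at hy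
  obtain ⟨l, hl, rfl⟩ := hy
  split_ifs with hlt
  · exact (h l hl hlt).pow_right _
  · exact Commute.one_right x

lemma commute_Eki_blk (γ : Matrix (Fin n) (Fin n) ℕ) (k i : Fin n) (hik : i ≠ k)
    (L : List (Fin n)) : Commute (Eop d k i) (blk d γ k L) := by
  apply commute_blk
  intro l _ hl
  exact E_commute d k i k l hik (fun h => absurd (congrArg Fin.val h) (Nat.ne_of_lt hl))

lemma commute_Eji_blk (γ : Matrix (Fin n) (Fin n) ℕ) (k i j : Fin n) (hik : i ≠ k)
    (L : List (Fin n)) (hj : j ∉ L) : Commute (Eop d j i) (blk d γ k L) := by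
  apply commute_blk
  intro l hl _
  exact E_commute d j i k l hik (fun h => hj (h ▸ hl))

/-- Absorption of `E_{ji}` into the row-`j` block. -/
lemma blk_absorb (γ γ' : Matrix (Fin n) (Fin n) ℕ) (i j : Fin n) (hij : (i : ℕ) < (j : ℕ))
    (L : List (Fin n)) (hL : L.Nodup) (hiL : i ∈ L)
    (h : ∀ l, γ' j l = if l = i then γ j i + 1 else γ j l) :
    blk d γ' j L = blk d γ j L * Eop d j i := by
  induction L with
  | nil => cases hiL
  | cons a L ih =>
      rcases List.nodup_cons.mp hL with ⟨haL, hLnd⟩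
      rcases eq_or_ne i a with rfl | hia
      · have hL' : blk d γ' j L = blk d γ j L := by
          apply blk_congr
          intro l hl
          rw [h l, if_neg (show ¬(l = i) from fun hli => haL (hli ▸ hl))]
        have hcomm : Commute (Eop d j i) (blk d γ j L) := by
          apply commute_blk
          intro l _ hl
          exact E_commute d j i j l (fun hh => absurd (congrArg Fin.val hh) (Nat.ne_of_lt hij))
            (fun hh => absurd (congrArg Fin.val hh) (Nat.ne_of_lt hl))
        rw [blk_cons, blk_cons, if_pos hij, if_pos hij, hL', h i, if_pos rfl, pow_succ,
          mul_assoc, hcomm.eq, ← mul_assoc]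
      · have hiL' : i ∈ L := by
          cases hiL with
          | head => exact absurd rfl hia
          | tail _ hm => exact hm
        rw [blk_cons, blk_cons, h a, if_neg (show ¬(a = i) from fun hh => hia hh.symm), ih hLnd hiL',
          ← mul_assoc]


/-- Passing `E_{ji}` through the row-`k` block (`i < j < k`). -/
lemma blk_pass (γ γ' : Matrix (Fin n) (Fin n) ℕ) (i j k : Fin n)
    (hij : (i : ℕ) < (j : ℕ)) (hjk : (j : ℕ) < (k : ℕ))
    (L : List (Fin n)) (hL : L.Nodup) (hjL : j ∈ L)
    (h : ∀ l, γ' k l = if l = j then γ k j - 1 else γ k l) :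
    blk d γ k L * Eop d j i =
      Eop d j i * blk d γ k L + (γ k j) • (Eop d k i * blk d γ' k L) := by
  have hik : i ≠ k := fun hh => absurd (congrArg Fin.val hh) (Nat.ne_of_lt (hij.trans hjk))
  have hjkne : j ≠ k := fun hh => absurd (congrArg Fin.val hh) (Nat.ne_of_lt hjk)
  induction L with
  | nil => cases hjL
  | cons a L ih =>
      rcases List.nodup_cons.mp hL with ⟨haL, hLnd⟩
      rcases eq_or_ne a j with rfl | haj
      · -- head is `j`
        have hcj : Commute (Eop d a i) (blk d γ k L) :=
          commute_Eji_blk d γ k i a hik L haL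
        have hL' : blk d γ' k L = blk d γ k L :=
          blk_congr d k L (fun l hl => by
            rw [h l, if_neg (show ¬(l = a) from fun hh => haL (hh ▸ hl))])
        rw [blk_cons, blk_cons, if_pos hjk, if_pos hjk, h a, if_pos rfl, hL',
          mul_assoc, ← hcj.eq, ← mul_assoc, E_pow_mul d i a k hik hjkne, add_mul,
          smul_mul_assoc, mul_assoc, mul_assoc]
      · have hjL' : j ∈ L := by
          cases hjL with
          | head => exact absurd rfl haj
          | tail _ hm => exact hm
        set f : U := if (a : ℕ) < (k : ℕ) then Eop d k a ^ γ k a else 1 with hf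
        have hfj : Commute (Eop d j i) f := by
          rw [hf]
          split_ifs with hak
          · exact (E_commute d j i k a hik haj).pow_right _
          · exact Commute.one_right _
        have hfi : Commute (Eop d k i) f := by
          rw [hf]
          split_ifs with hak
          · exact (E_commute d k i k a hik
              (fun hh => absurd (congrArg Fin.val hh) (Nat.ne_of_lt hak))).pow_right _
          · exact Commute.one_right _
        have hfa : (if (a : ℕ) < (k : ℕ) then Eop d k a ^ γ' k a else 1) = f := by
          rw [h a, if_neg haj, hf]
        calc blk d γ k (a :: L) * Eop d j i
            = f * (blk d γ k L * Eop d j i) := by rw [blk_cons, mul_assoc]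
          _ = f * (Eop d j i * blk d γ k L + (γ k j) • (Eop d k i * blk d γ' k L)) := by
              rw [ih hLnd hjL']
          _ = Eop d j i * (f * blk d γ k L) + (γ k j) • (Eop d k i * (f * blk d γ' k L)) := by
              rw [mul_add, mul_smul_comm, ← mul_assoc, ← mul_assoc, ← hfj.eq, ← hfi.eq,
                mul_assoc, mul_assoc]
          _ = Eop d j i * blk d γ k (a :: L) + (γ k j) • (Eop d k i * blk d γ' k (a :: L)) := by
              rw [blk_cons, blk_cons, hfa]

/-- Multi-block product. -/
def mblk (d : OspData n U) (γ : Matrix (Fin n) (Fin n) ℕ) (K : List (Fin n)) : U :=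
  (K.map fun (k : Fin n) => blk d γ k (List.finRange n)).prod

lemma mblk_cons (γ : Matrix (Fin n) (Fin n) ℕ) (a : Fin n) (K : List (Fin n)) :
    mblk d γ (a :: K) = blk d γ a (List.finRange n) * mblk d γ K := by
  simp [mblk]

lemma mblk_append (γ : Matrix (Fin n) (Fin n) ℕ) (K₁ K₂ : List (Fin n)) :
    mblk d γ (K₁ ++ K₂) = mblk d γ K₁ * mblk d γ K₂ := by
  simp [mblk]

lemma Epow_eq_mblk (γ : Matrix (Fin n) (Fin n) ℕ) :
    Epow d γ = mblk d γ (List.finRange n) := rfl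

lemma mblk_congr {γ γ' : Matrix (Fin n) (Fin n) ℕ} (K : List (Fin n))
    (h : ∀ k ∈ K, ∀ l, γ k l = γ' k l) : mblk d γ K = mblk d γ' K := by
  unfold mblk
  congr 1
  apply List.map_congr_left
  intro k hk
  exact blk_congr d k _ (fun l _ => h k hk l)


def updA (γ : Matrix (Fin n) (Fin n) ℕ) (v i j : Fin n) : Matrix (Fin n) (Fin n) ℕ :=
  Matrix.of fun a b =>
    if a = v ∧ b = i then γ a b + 1 else if a = v ∧ b = j then γ a b - 1 else γ a b

def updS (γ : Matrix (Fin n) (Fin n) ℕ) (v j : Fin n) : Matrix (Fin n) (Fin n) ℕ :=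
  Matrix.of fun a b => if a = v ∧ b = j then γ a b - 1 else γ a b

def updP (γ : Matrix (Fin n) (Fin n) ℕ) (j i : Fin n) : Matrix (Fin n) (Fin n) ℕ :=
  Matrix.of fun a b => if a = j ∧ b = i then γ a b + 1 else γ a b

lemma mblk_pass (γ : Matrix (Fin n) (Fin n) ℕ) (i j : Fin n) (hij : (i : ℕ) < (j : ℕ))
    (K : List (Fin n)) (hK : K.Nodup) (hKj : ∀ k ∈ K, (j : ℕ) < (k : ℕ)) :
    mblk d γ K * Eop d j i =
      Eop d j i * mblk d γ K +
        (K.map fun v => (γ v j) • mblk d (updA γ v i j) K).sum := by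
  have hijne : i ≠ j := fun hh => absurd (congrArg Fin.val hh) (Nat.ne_of_lt hij)
  induction K generalizing γ with
  | nil => simp [mblk]
  | cons a K ih =>
      rcases List.nodup_cons.mp hK with ⟨haK, hKnd⟩
      have hja : (j : ℕ) < (a : ℕ) := hKj a List.mem_cons_self
      have hiaval : (i : ℕ) < (a : ℕ) := hij.trans hja
      have hia : i ≠ a := fun hh => absurd (congrArg Fin.val hh) (Nat.ne_of_lt hiaval)
      have hUS : ∀ l, (updS γ a j) a l = if l = j then γ a j - 1 else γ a l := by
        intro l
        by_cases hl : l = j <;> simp [updS, hl]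
      have hQ := blk_pass d γ (updS γ a j) i j a hij hja (List.finRange n)
        (List.nodup_finRange n) (List.mem_finRange j) hUS
      have habs : blk d (updA γ a i j) a (List.finRange n) =
          blk d (updS γ a j) a (List.finRange n) * Eop d a i := by
        apply blk_absorb d (updS γ a j) (updA γ a i j) i a hiaval (List.finRange n)
          (List.nodup_finRange n) (List.mem_finRange i)
        intro l
        rcases eq_or_ne l i with rfl | hli
        · simp [updA, updS, hijne]
        · by_cases hlj : l = j <;> simp [updA, updS, hli, hlj, Ne.symm hijne]
      have hEki : Eop d a i * blk d (updS γ a j) a (List.finRange n) =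
          blk d (updA γ a i j) a (List.finRange n) := by
        rw [habs, ← (commute_Eki_blk d (updS γ a j) a i hia (List.finRange n)).eq]
      have hKcongr : ∀ (δ : Matrix (Fin n) (Fin n) ℕ) (v : Fin n), v ∉ K →
          mblk d δ K = mblk d (updA δ v i j) K := by
        intro δ v hv
        apply mblk_congr
        intro k hk l
        have : k ≠ v := fun hh => hv (hh ▸ hk)
        simp [updA, this]
      have hblkA : ∀ v ∈ K, blk d γ a (List.finRange n) =
          blk d (updA γ v i j) a (List.finRange n) := by
        intro v hv
        apply blk_congr
        intro l _
        have : a ≠ v := fun hh => haK (hh ▸ hv)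
        simp [updA, this]
      calc mblk d γ (a :: K) * Eop d j i
          = blk d γ a (List.finRange n) * (mblk d γ K * Eop d j i) := by
            rw [mblk_cons, mul_assoc]
        _ = blk d γ a (List.finRange n) * (Eop d j i * mblk d γ K +
              (K.map fun v => (γ v j) • mblk d (updA γ v i j) K).sum) := by
            rw [ih γ hKnd (fun k hk => hKj k (List.mem_cons_of_mem a hk))]
        _ = (blk d γ a (List.finRange n) * Eop d j i) * mblk d γ K +
              (K.map fun v => (γ v j) •
                (blk d γ a (List.finRange n) * mblk d (updA γ v i j) K)).sum := by
            rw [mul_add, ← mul_assoc, ← List.sum_map_mul_left]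
            congr 1
            congr 1
            apply List.map_congr_left
            intro v _
            rw [mul_smul_comm]
        _ = Eop d j i * mblk d γ (a :: K) +
              ((γ a j) • mblk d (updA γ a i j) (a :: K) +
               (K.map fun v => (γ v j) • mblk d (updA γ v i j) (a :: K)).sum) := by
            have h1 : (blk d γ a (List.finRange n) * Eop d j i) * mblk d γ K
                = Eop d j i * mblk d γ (a :: K) +
                  (γ a j) • mblk d (updA γ a i j) (a :: K) := by
              rw [hQ, add_mul, smul_mul_assoc, mul_assoc, ← mblk_cons,
                hKcongr γ a haK, hEki, ← mblk_cons]
            rw [h1, add_assoc]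
            congr 2
            congr 1
            apply List.map_congr_left
            intro v hv
            rw [hblkA v hv, ← mblk_cons]
        _ = Eop d j i * mblk d γ (a :: K) +
              ((a :: K).map fun v => (γ v j) • mblk d (updA γ v i j) (a :: K)).sum := by
            rw [List.map_cons, List.sum_cons]


lemma finRange_split (j : Fin n) :
    List.finRange n =
      (List.finRange n).take (j : ℕ) ++ j :: (List.finRange n).drop ((j : ℕ) + 1) := by
  have hlen : (j : ℕ) < (List.finRange n).length := by
    simpa using j.isLt
  have hget : (List.finRange n)[(j : ℕ)] = j := by
    rw [List.getElem_finRange]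
    ext
    simp
  conv_lhs => rw [← List.take_append_drop (j : ℕ) (List.finRange n)]
  rw [List.drop_eq_getElem_cons hlen, hget]

lemma mem_take_lt {k j : Fin n} (h : k ∈ (List.finRange n).take (j : ℕ)) :
    (k : ℕ) < (j : ℕ) := by
  rw [List.mem_take_iff_getElem] at h
  obtain ⟨m, hm, hk⟩ := h
  rw [List.getElem_finRange] at hk
  have : (k : ℕ) = m := by rw [← hk]; simp
  omega

lemma mem_drop_gt {k j : Fin n} (h : k ∈ (List.finRange n).drop ((j : ℕ) + 1)) :
    (j : ℕ) < (k : ℕ) := by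
  rw [List.mem_drop_iff_getElem] at h
  obtain ⟨m, hm, hk⟩ := h
  rw [List.getElem_finRange] at hk
  have : (k : ℕ) = (j : ℕ) + 1 + m := by rw [← hk]; simp
  omega

/-- The single-step straightening law, natural-number version. -/
lemma stepN (γ : Matrix (Fin n) (Fin n) ℕ) (i j : Fin n) (hij : (i : ℕ) < (j : ℕ)) :
    Epow d γ * Eop d j i =
      Epow d (updP γ j i) +
        (((List.finRange n).drop ((j : ℕ) + 1)).map
          (fun v => (γ v j) • Epow d (updA γ v i j))).sum := by
  have hijne : i ≠ j := fun hh => absurd (congrArg Fin.val hh) (Nat.ne_of_lt hij)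
  set K₁ := (List.finRange n).take (j : ℕ) with hK₁
  set K₂ := (List.finRange n).drop ((j : ℕ) + 1) with hK₂
  have hsplit := finRange_split (n := n) j
  have hK2nd : K₂.Nodup := (List.drop_sublist _ _).nodup (List.nodup_finRange n)
  have hK2j : ∀ k ∈ K₂, (j : ℕ) < (k : ℕ) := fun k hk => mem_drop_gt hk
  have hK1j : ∀ k ∈ K₁, (k : ℕ) < (j : ℕ) := fun k hk => mem_take_lt hk
  have hsplitm : ∀ δ : Matrix (Fin n) (Fin n) ℕ, Epow d δ =
      mblk d δ K₁ * (blk d δ j (List.finRange n) * mblk d δ K₂) := by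
    intro δ
    rw [Epow_eq_mblk]
    conv_lhs => rw [hsplit]
    rw [mblk_append, mblk_cons]
  have habs : blk d (updP γ j i) j (List.finRange n) =
      blk d γ j (List.finRange n) * Eop d j i := by
    apply blk_absorb d γ (updP γ j i) i j hij (List.finRange n)
      (List.nodup_finRange n) (List.mem_finRange i)
    intro l
    by_cases hl : l = i <;> simp [updP, hl]
  have hK1P : mblk d γ K₁ = mblk d (updP γ j i) K₁ := by
    apply mblk_congr
    intro k hk l
    have : k ≠ j := fun hh => absurd (congrArg Fin.val hh) (Nat.ne_of_lt (hK1j k hk))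
    simp [updP, this]
  have hK2P : mblk d γ K₂ = mblk d (updP γ j i) K₂ := by
    apply mblk_congr
    intro k hk l
    have : k ≠ j := fun hh =>
      absurd (congrArg Fin.val hh) (Nat.ne_of_gt (hK2j k hk))
    simp [updP, this]
  have hK1A : ∀ v ∈ K₂, mblk d γ K₁ = mblk d (updA γ v i j) K₁ := by
    intro v hv
    apply mblk_congr
    intro k hk l
    have : k ≠ v := fun hh =>
      absurd (congrArg Fin.val hh) (Nat.ne_of_lt ((hK1j k hk).trans (hK2j v hv)))
    simp [updA, this]
  have hblkjA : ∀ v ∈ K₂, blk d γ j (List.finRange n) =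
      blk d (updA γ v i j) j (List.finRange n) := by
    intro v hv
    apply blk_congr
    intro l _
    have : j ≠ v := fun hh => absurd (congrArg Fin.val hh) (Nat.ne_of_lt (hK2j v hv))
    simp [updA, this]
  calc Epow d γ * Eop d j i
      = mblk d γ K₁ * (blk d γ j (List.finRange n) * (mblk d γ K₂ * Eop d j i)) := by
        rw [hsplitm γ, mul_assoc, mul_assoc]
    _ = mblk d γ K₁ * (blk d γ j (List.finRange n) *
          (Eop d j i * mblk d γ K₂ +
            (K₂.map fun v => (γ v j) • mblk d (updA γ v i j) K₂).sum)) := by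
        rw [mblk_pass d γ i j hij K₂ hK2nd hK2j]
    _ = mblk d (updP γ j i) K₁ * (blk d (updP γ j i) j (List.finRange n) *
          mblk d (updP γ j i) K₂) +
        (K₂.map fun v => (γ v j) • (mblk d (updA γ v i j) K₁ *
          (blk d (updA γ v i j) j (List.finRange n) * mblk d (updA γ v i j) K₂))).sum := by
        rw [mul_add, mul_add]
        congr 1
        · rw [habs, ← hK1P, ← hK2P]
          simp only [mul_assoc]
        · rw [← mul_assoc, ← List.sum_map_mul_left]
          congr 1
          apply List.map_congr_left
          intro v hv
          rw [mul_smul_comm, ← hK1A v hv, ← hblkjA v hv, mul_assoc]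
    _ = Epow d (updP γ j i) +
        (K₂.map fun v => (γ v j) • Epow d (updA γ v i j)).sum := by
        rw [← hsplitm]
        congr 1
        congr 1
        apply List.map_congr_left
        intro v hv
        rw [← hsplitm]


lemma blk_congr' {γ γ' : Matrix (Fin n) (Fin n) ℕ} (k : Fin n) (L : List (Fin n))
    (h : ∀ l ∈ L, (l : ℕ) < (k : ℕ) → γ k l = γ' k l) : blk d γ k L = blk d γ' k L := by
  unfold blk
  congr 1
  apply List.map_congr_left
  intro j hj
  split_ifs with hlt
  · rw [h j hj hlt]
  · rfl

lemma Epow_congr_lower {γ γ' : Matrix (Fin n) (Fin n) ℕ}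
    (h : ∀ a b : Fin n, (b : ℕ) < (a : ℕ) → γ a b = γ' a b) : Epow d γ = Epow d γ' := by
  rw [Epow_eq_blk, Epow_eq_blk]
  congr 1
  apply List.map_congr_left
  intro k _
  exact blk_congr' d k _ (fun l _ hl => h k l hl)

end OspBasis

open OspBasis

lemma EpowZ_congr_lower {n : ℕ} {U : Type*} [Ring U] [Algebra ℂ U] (d : OspData n U)
    {γ γ' : Matrix (Fin n) (Fin n) ℤ}
    (h : ∀ a b : Fin n, (b : ℕ) < (a : ℕ) → γ a b = γ' a b) : EpowZ d γ = EpowZ d γ' := by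
  unfold EpowZ
  have hcond : (∀ a b : Fin n, (b : ℕ) < (a : ℕ) → 0 ≤ γ a b) ↔
      (∀ a b : Fin n, (b : ℕ) < (a : ℕ) → 0 ≤ γ' a b) := by
    constructor <;> intro hc a b hab
    · rw [← h a b hab]; exact hc a b hab
    · rw [h a b hab]; exact hc a b hab
  by_cases hc : ∀ a b : Fin n, (b : ℕ) < (a : ℕ) → 0 ≤ γ a b
  · rw [if_pos hc, if_pos (hcond.mp hc)]
    apply Epow_congr_lower
    intro a b hab
    simp only [Matrix.of_apply]
    rw [h a b hab]
  · rw [if_neg hc, if_neg (fun hh => hc (hcond.mpr hh))]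

lemma EpowZ_natCast {n : ℕ} {U : Type*} [Ring U] [Algebra ℂ U] (d : OspData n U)
    (γ : Matrix (Fin n) (Fin n) ℕ) :
    EpowZ d (Matrix.of fun a b => (γ a b : ℤ)) = Epow d γ := by
  unfold EpowZ
  rw [if_pos (fun a b _ => by simp)]
  apply Epow_congr_lower d
  intro a b _
  simp

namespace OspBasis

variable {n : ℕ} {U : Type*} [Ring U] [Algebra ℂ U] (d : OspData n U)

/-- The single-step straightening law, `EpowZ` version. -/
lemma stepZ (γ : Matrix (Fin n) (Fin n) ℕ) (i j : Fin n) (hij : i < j) :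
    Epow d γ * Eop d j i =
      ∑ v ∈ Finset.Ici j, (((if v = j then 1 else γ v j : ℕ)) : ℂ) •
        EpowZ d ((Matrix.of fun a b => (γ a b : ℤ)) +
          (Matrix.single v i (1 : ℤ) - Matrix.single v j (1 : ℤ))) := by
  have hijv : (i : ℕ) < (j : ℕ) := hij
  have hijne : i ≠ j := ne_of_lt hij
  rw [stepN d γ i j hijv, ← Finset.Ioi_insert, Finset.sum_insert (by simp)]
  congr 1
  · -- the `v = j` term
    rw [if_pos rfl, Nat.cast_one, one_smul]
    have hpos : ∀ a b : Fin n, (b : ℕ) < (a : ℕ) →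
        0 ≤ ((Matrix.of fun a b => (γ a b : ℤ)) +
          (Matrix.single j i (1 : ℤ) - Matrix.single j j (1 : ℤ))) a b := by
      intro a b hab
      have hne : ¬(j = a ∧ j = b) := by
        rintro ⟨rfl, rfl⟩
        exact absurd hab (lt_irrefl _)
      simp only [Matrix.add_apply, Matrix.sub_apply, Matrix.of_apply, Matrix.single,
        hne, if_false]
      split_ifs <;> omega
    rw [EpowZ, if_pos hpos]
    apply Eq.symm
    apply Epow_congr_lower d
    intro a b hab
    have hne : ¬(j = a ∧ j = b) := by
      rintro ⟨rfl, rfl⟩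
      exact absurd hab (lt_irrefl _)
    simp only [Matrix.add_apply, Matrix.sub_apply, Matrix.of_apply, Matrix.single,
      hne, if_false, updP]
    split_ifs with h1 <;> omega
  · -- the `v > j` terms
    have hnd : ((List.finRange n).drop ((j : ℕ) + 1)).Nodup :=
      (List.drop_sublist _ _).nodup (List.nodup_finRange n)
    have htf : ((List.finRange n).drop ((j : ℕ) + 1)).toFinset = Finset.Ioi j := by
      ext k
      simp only [List.mem_toFinset, Finset.mem_Ioi]
      constructor
      · intro hk
        exact mem_drop_gt hk
      · intro hk
        rw [List.mem_drop_iff_getElem]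
        have hkn := k.isLt
        refine ⟨(k : ℕ) - ((j : ℕ) + 1), ?_, ?_⟩
        · simp only [List.length_finRange]
          omega
        · rw [List.getElem_finRange]
          ext
          simp only [Fin.coe_cast]
          omega
    rw [← htf, List.sum_toFinset _ hnd]
    congr 1
    apply List.map_congr_left
    intro v hv
    have hjv : (j : ℕ) < (v : ℕ) := mem_drop_gt hv
    have hvj : v ≠ j := fun hh => absurd (congrArg Fin.val hh) (Nat.ne_of_gt hjv)
    rw [if_neg hvj]
    rcases Nat.eq_zero_or_pos (γ v j) with hz | hz
    · rw [hz]
      simp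
    · have hpos : ∀ a b : Fin n, (b : ℕ) < (a : ℕ) →
          0 ≤ ((Matrix.of fun a b => (γ a b : ℤ)) +
            (Matrix.single v i (1 : ℤ) - Matrix.single v j (1 : ℤ))) a b := by
        intro a b hab
        simp only [Matrix.add_apply, Matrix.sub_apply, Matrix.of_apply, Matrix.single]
        by_cases ha : v = a <;> by_cases hbi : i = b <;> by_cases hbj : j = b <;>
          simp only [ha, hbi, hbj, if_true, if_false, and_true, and_false, true_and,
            false_and, if_pos, and_self] <;>
          first
            | (exact absurd (hbi.symm.trans hbj) hijne)
            | (subst_vars; omega)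
            | omega
      rw [EpowZ, if_pos hpos, Nat.cast_smul_eq_nsmul]
      congr 1
      apply Eq.symm
      apply Epow_congr_lower d
      intro a b hab
      simp only [updA, Matrix.add_apply, Matrix.sub_apply, Matrix.of_apply,
        Matrix.single]
      by_cases ha : a = v <;> by_cases hbi : b = i <;> by_cases hbj : b = j <;>
        simp only [ha, hbi, hbj, if_true, if_false, and_true, and_false, true_and,
          false_and, and_self, eq_self_iff_true] <;>
        first
          | (exact absurd (hbi ▸ hbj : i = j) hijne)
          | (subst_vars; simp_all; omega)
          | (subst_vars; omega)
          | omega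

end OspBasis

end Lemmas
theorem stmt16 {n : ℕ} (hn : 0 < n) {U : Type*} [Ring U] [Algebra ℂ U] (d : OspData n U)
    (γ : Matrix (Fin n) (Fin n) ℕ)
    (s : ℕ) (I : Fin (s + 1) → Fin n) (hI : StrictMono I) :
    Epow d γ * ((List.finRange s).map (fun u => Eop d (I u.succ) (I u.castSucc))).prod =
      ∑ v ∈ Finset.univ.filter (fun v : Fin s → Fin n => ∀ u, I u.succ ≤ v u),
        ((∏ u : Fin s, (if v u = I u.succ then 1 else γ (v u) (I u.succ)) : ℕ) : ℂ) •
          EpowZ d ((Matrix.of fun a b => ((γ a b : ℤ))) +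
            ∑ u : Fin s,
              (Matrix.single (v u) (I u.castSucc) (1 : ℤ) -
               Matrix.single (v u) (I u.succ) (1 : ℤ))) := by
  induction s generalizing γ with
  | zero =>
      simp only [List.finRange_zero, List.map_nil, List.prod_nil, mul_one]
      have hfilter : (Finset.univ.filter fun v : Fin 0 → Fin n => ∀ u, I u.succ ≤ v u) =
          Finset.univ := by
        apply Finset.filter_true_of_mem
        intro v _ u
        exact u.elim0
      rw [hfilter, Finset.univ_unique, Finset.sum_singleton]
      simp only [Finset.univ_eq_empty, Finset.prod_empty, Finset.sum_empty, add_zero,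
        Nat.cast_one, one_smul]
      rw [EpowZ_natCast]
  | succ t ih =>
      have hij0 : I ((0 : Fin (t + 1)).castSucc) < I ((0 : Fin (t + 1)).succ) :=
        hI (Fin.castSucc_lt_succ (i := 0))
      set i0 := I ((0 : Fin (t + 1)).castSucc) with hi0def
      set j0 := I ((0 : Fin (t + 1)).succ) with hj0def
      have hI' : StrictMono (fun u : Fin (t + 1) => I u.succ) := by
        intro a b hab
        exact hI (Fin.succ_lt_succ_iff.mpr hab)
      -- index distinctness facts
      have hIne : ∀ z : Fin (t + 1), (z : ℕ) ≠ 0 → I z.succ ≠ j0 ∧ I z.succ ≠ i0 := by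
        intro z hz
        constructor
        · intro hh
          have := hI.injective hh
          exact hz (by rw [Fin.succ_inj.mp this]; simp)
        · intro hh
          have := hI.injective hh
          have := congrArg Fin.val this
          simp [Fin.val_succ] at this
      -- rewrite the chain
      simp only [List.finRange_succ, List.map_cons, List.prod_cons, List.map_map,
        ← mul_assoc]
      rw [stepZ d γ i0 j0 hij0]
      rw [Finset.sum_mul]
      simp only [smul_mul_assoc]
      have hIci : ∀ f : Fin n → U, (∑ v ∈ Finset.Ici j0, f v) =
          ∑ v : Fin n, if j0 ≤ v then f v else 0 := by
        intro f
        rw [← Finset.sum_filter]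
        congr 1
        ext
        simp
      rw [hIci]
      -- rewrite the RHS as a double sum
      rw [Finset.sum_filter]
      rw [← Equiv.sum_comp (Fin.consEquiv fun _ : Fin (t + 1) => Fin n)]
      rw [Fintype.sum_prod_type]
      apply Finset.sum_congr rfl
      intro x _
      -- the function at (x, w) : `Fin.consEquiv _ (x, w) = Fin.cons x w`
      have hcons : ∀ w : Fin t → Fin n, (Fin.consEquiv fun _ : Fin (t + 1) => Fin n) (x, w)
          = Fin.cons x w := fun w => rfl
      by_cases hx : j0 ≤ x
      · rw [if_pos hx]
        set c : ℕ := if x = j0 then 1 else γ x j0 with hcdef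
        by_cases hc : c = 0
        · -- zero coefficient: both sides vanish
          rw [hc]
          simp only [Nat.cast_zero, zero_smul]
          symm
          apply Finset.sum_eq_zero
          intro w _
          rw [hcons]
          split_ifs with hcond
          · have h0 : (if (Fin.cons x w : Fin (t + 1) → Fin n) 0 = I (0 : Fin (t + 1)).succ
                then 1 else γ ((Fin.cons x w : Fin (t + 1) → Fin n) 0) (I (0 : Fin (t + 1)).succ)) = 0 := by
              simpa [Fin.cons_zero, hcdef, hj0def] using hc
            rw [Fin.prod_univ_succ, h0, Nat.zero_mul, Nat.cast_zero, zero_smul]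
          · rfl
        · -- nonzero coefficient
          have hnonneg : ∀ a b : Fin n, (b : ℕ) < (a : ℕ) →
              0 ≤ ((Matrix.of fun a b => (γ a b : ℤ)) +
                (Matrix.single x i0 (1 : ℤ) - Matrix.single x j0 (1 : ℤ))) a b := by
            intro a b hab
            simp only [Matrix.add_apply, Matrix.sub_apply, Matrix.of_apply,
              Matrix.single, Matrix.of_apply]
            by_cases h1 : x = a ∧ i0 = b <;> by_cases h2 : x = a ∧ j0 = b
            · exfalso
              have : i0 = j0 := h1.2.trans h2.2.symm
              exact absurd this (ne_of_lt hij0)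
            · simp only [h1, h2, if_true, if_false]
              omega
            · -- subtracting 1 at (x, j0); since `c ≠ 0` and `x ≠ j0` (as (x,j0) strictly lower)
              simp only [h1, h2, if_true, if_false]
              obtain ⟨rfl, rfl⟩ := h2
              have hxj : x ≠ j0 := by
                intro hh
                rw [hh] at hab
                exact absurd hab (lt_irrefl _)
              rw [hcdef] at hc
              simp only [hxj, if_false] at hc
              omega
            · simp only [h1, h2, if_false]
              omega
          set γ₁ : Matrix (Fin n) (Fin n) ℕ := Matrix.of fun a b =>
            (((Matrix.of fun a b => (γ a b : ℤ)) +
              (Matrix.single x i0 (1 : ℤ) - Matrix.single x j0 (1 : ℤ))) a b).toNat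
            with hγ₁def
          have hM : EpowZ d ((Matrix.of fun a b => (γ a b : ℤ)) +
              (Matrix.single x i0 (1 : ℤ) - Matrix.single x j0 (1 : ℤ)))
              = Epow d γ₁ := by
            rw [EpowZ, if_pos hnonneg]
          rw [hM]
          -- identify the tail with the chain of `I ∘ succ`
          have htail : ((List.finRange t).map
              ((fun u : Fin (t + 1) => Eop d (I u.succ) (I u.castSucc)) ∘ Fin.succ)).prod =
              ((List.finRange t).map (fun u : Fin t =>
                Eop d ((fun z : Fin (t + 1) => I z.succ) u.succ)
                  ((fun z : Fin (t + 1) => I z.succ) u.castSucc))).prod := by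
            rfl
          rw [htail, ih γ₁ _ hI', Finset.sum_filter, Finset.smul_sum]
          apply Finset.sum_congr rfl
          intro w _
          rw [hcons]
          by_cases hw : ∀ u : Fin t, I u.succ.succ ≤ w u
          · have hcondfull : ∀ u : Fin (t + 1), I u.succ ≤ (Fin.cons x w : Fin (t + 1) → Fin n) u := by
              intro u
              refine Fin.cases ?_ ?_ u
              · simpa [Fin.cons_zero, hj0def] using hx
              · intro z
                simpa [Fin.cons_succ] using hw z
            rw [if_pos hw, if_pos hcondfull]
            have hcol : ∀ (r : Fin n) (z : Fin (t + 1)), (z : ℕ) ≠ 0 →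
                γ₁ r (I z.succ) = γ r (I z.succ) := by
              intro r z hz
              have h1 : ¬(x = r ∧ i0 = I z.succ) := fun hh => (hIne z hz).2 hh.2.symm
              have h2 : ¬(x = r ∧ j0 = I z.succ) := fun hh => (hIne z hz).1 hh.2.symm
              rw [hγ₁def]
              simp only [Matrix.of_apply, Matrix.add_apply, Matrix.sub_apply,
                Matrix.single, Matrix.of_apply, h1, h2, if_false]
              omega
            have hP : (∏ u : Fin (t + 1),
                if (Fin.cons x w : Fin (t + 1) → Fin n) u = I u.succ then 1
                else γ ((Fin.cons x w : Fin (t + 1) → Fin n) u) (I u.succ)) =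
                c * ∏ u : Fin t,
                  if w u = I u.succ.succ then 1 else γ (w u) (I u.succ.succ) := by
              rw [Fin.prod_univ_succ]
              congr 1
            have hP1 : (∏ u : Fin t,
                if w u = I u.succ.succ then 1 else γ₁ (w u) (I u.succ.succ)) =
                ∏ u : Fin t,
                  if w u = I u.succ.succ then 1 else γ (w u) (I u.succ.succ) := by
              apply Finset.prod_congr rfl
              intro u _
              rw [hcol (w u) u.succ (by simp [Fin.val_succ])]
            have hentry : ∀ a b : Fin n, (b : ℕ) < (a : ℕ) →
                ((γ₁ a b : ℤ)) = (γ a b : ℤ) +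
                  (Matrix.single x i0 (1 : ℤ) a b -
                   Matrix.single x j0 (1 : ℤ) a b) := by
              intro a b hab
              have hnn := hnonneg a b hab
              rw [hγ₁def]
              simp only [Matrix.of_apply]
              rw [Int.toNat_of_nonneg hnn]
              simp [Matrix.add_apply, Matrix.sub_apply]
            have hX : EpowZ d ((Matrix.of fun a b => (γ₁ a b : ℤ)) +
                ∑ u : Fin t,
                  (Matrix.single (w u) (I u.succ.castSucc) (1 : ℤ) -
                   Matrix.single (w u) (I u.succ.succ) (1 : ℤ))) =
                EpowZ d ((Matrix.of fun a b => (γ a b : ℤ)) +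
                  ((Matrix.single x i0 (1 : ℤ) - Matrix.single x j0 (1 : ℤ)) +
                   ∑ u : Fin t,
                    (Matrix.single (w u) (I u.succ.castSucc) (1 : ℤ) -
                     Matrix.single (w u) (I u.succ.succ) (1 : ℤ)))) := by
              apply EpowZ_congr_lower
              intro a b hab
              simp only [Matrix.add_apply, Matrix.sub_apply, Matrix.of_apply]
              have := hentry a b hab
              omega
            have hsum : (∑ u : Fin (t + 1),
                (Matrix.single ((Fin.cons x w : Fin (t + 1) → Fin n) u) (I u.castSucc) (1 : ℤ) -
                 Matrix.single ((Fin.cons x w : Fin (t + 1) → Fin n) u) (I u.succ) (1 : ℤ))) =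
                (Matrix.single x i0 (1 : ℤ) - Matrix.single x j0 (1 : ℤ)) +
                ∑ u : Fin t,
                  (Matrix.single (w u) (I u.succ.castSucc) (1 : ℤ) -
                   Matrix.single (w u) (I u.succ.succ) (1 : ℤ)) := by
              rw [Fin.sum_univ_succ]
              simp only [Fin.cons_zero, Fin.cons_succ]
              rfl
            beta_reduce
            simp only [Fin.succ_castSucc]
            rw [hsum, hP, hP1, hX, smul_smul, ← Nat.cast_mul]
          · have hcondfull : ¬ ∀ u : Fin (t + 1), I u.succ ≤ (Fin.cons x w : Fin (t + 1) → Fin n) u := by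
              intro hcond
              apply hw
              intro u
              simpa [Fin.cons_succ] using hcond u.succ
            rw [if_neg hw, if_neg hcondfull, smul_zero]
      · rw [if_neg hx]
        symm
        apply Finset.sum_eq_zero
        intro w _
        rw [hcons, if_neg]
        intro hcond
        exact hx (by simpa [Fin.cons_zero, hj0def] using hcond 0)
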